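/- Let T > 0 and let u ∈ C¹([0,T]) be nonzero with u(0) + u(T) = 0 and u'(0) + u'(T) = 0. Then ∫₀ᵀ u'(t)² dt > (4/T)·‖u‖_∞² (strict inequality). -/

import Mathlib

open Set intervalIntegral MeasureTheory

/-- A continuous nonnegative function on `[0,T]` with nonpositive integral vanishes. -/
lemma aux_zero_of_nonneg_of_integral_nonpos {T : ℝ} (hT : 0 < T) {g : ℝ → ℝ}
    (hg : ContinuousOn g (Icc 0 T)) (hnn : ∀ t ∈ Icc (0:ℝ) T, 0 ≤ g t)
    (hint : ∫ t in (0:ℝ)..T, g t ≤ 0) : ∀ t ∈ Icc (0:ℝ) T, g t = 0 := by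
  by_contra h
  push_neg at h
  obtain ⟨t₁, ht₁, hgt₁⟩ := h
  have hpos : 0 < g t₁ := lt_of_le_of_ne (hnn t₁ ht₁) (Ne.symm hgt₁)
  have hc := hg t₁ ht₁
  rw [Metric.continuousWithinAt_iff] at hc
  obtain ⟨δ, hδ, hball⟩ := hc (g t₁ / 2) (half_pos hpos)
  set a := max 0 (t₁ - δ/2) with ha_def
  set b := min T (t₁ + δ/2) with hb_def
  have ha0 : 0 ≤ a := le_max_left _ _
  have hbT : b ≤ T := min_le_left _ _
  have hat₁ : a ≤ t₁ := max_le ht₁.1 (by linarith)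
  have ht₁b : t₁ ≤ b := le_min ht₁.2 (by linarith)
  have hab : a < b := by
    rcases lt_or_eq_of_le ht₁.2 with h1 | h1
    · have : t₁ < b := lt_min h1 (by linarith)
      linarith
    · have : a < t₁ := by
        apply max_lt
        · rw [← h1] at hT; exact hT
        · linarith
      linarith
  -- on [a,b], g > g t₁ / 2
  have hlow : ∀ x ∈ Icc a b, g t₁ / 2 ≤ g x := by
    intro x hx
    have hxI : x ∈ Icc (0:ℝ) T := ⟨le_trans ha0 hx.1, le_trans hx.2 hbT⟩
    have hdist : dist x t₁ < δ := by
      rw [Real.dist_eq, abs_lt]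
      constructor
      · have := hx.1; have := hat₁
        have : t₁ - δ/2 ≤ a := le_max_right _ _
        linarith [hx.1]
      · have : b ≤ t₁ + δ/2 := min_le_right _ _
        linarith [hx.2]
    have := hball hxI hdist
    rw [Real.dist_eq, abs_lt] at this
    linarith [this.1]
  have hIg : ∀ p ∈ Icc (0:ℝ) T, ∀ q ∈ Icc (0:ℝ) T, IntervalIntegrable g volume p q := by
    intro p hp q hq
    exact (hg.mono (uIcc_subset_Icc hp hq)).intervalIntegrable
  have haI : a ∈ Icc (0:ℝ) T := ⟨ha0, le_trans hab.le hbT⟩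
  have hbI : b ∈ Icc (0:ℝ) T := ⟨le_trans ha0 hab.le, hbT⟩
  have h0I : (0:ℝ) ∈ Icc (0:ℝ) T := ⟨le_rfl, hT.le⟩
  have hTI : T ∈ Icc (0:ℝ) T := ⟨hT.le, le_rfl⟩
  have hsplit : ∫ t in (0:ℝ)..T, g t =
      (∫ t in (0:ℝ)..a, g t) + ((∫ t in a..b, g t) + ∫ t in b..T, g t) := by
    rw [integral_add_adjacent_intervals (hIg a haI b hbI) (hIg b hbI T hTI),
      integral_add_adjacent_intervals (hIg 0 h0I a haI) (hIg a haI T hTI)]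
  have h1 : 0 ≤ ∫ t in (0:ℝ)..a, g t :=
    integral_nonneg ha0 (fun x hx => hnn x ⟨hx.1, le_trans hx.2 haI.2⟩)
  have h2 : 0 ≤ ∫ t in b..T, g t :=
    integral_nonneg hbT (fun x hx => hnn x ⟨le_trans hbI.1 hx.1, hx.2⟩)
  have h3 : (b - a) * g t₁ / 2 ≤ ∫ t in a..b, g t := by
    have := integral_mono_on (μ := volume) (f := fun _ => g t₁ / 2) (g := g) hab.le
      intervalIntegrable_const (hIg a haI b hbI) hlow
    simpa [smul_eq_mul] using this
  have h4 : 0 < (b - a) * g t₁ / 2 := by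
    have hba : 0 < b - a := by linarith
    positivity
  linarith [hsplit ▸ hint]

set_option maxHeartbeats 1000000 in
theorem stmt10 (T : ℝ) (hT : 0 < T) (u u' : ℝ → ℝ) (M : ℝ)
    (hderiv : ∀ t ∈ Set.Icc (0:ℝ) T, HasDerivWithinAt u (u' t) (Set.Icc 0 T) t)
    (hcont : ContinuousOn u' (Set.Icc 0 T))
    (hant : u 0 + u T = 0) (hant' : u' 0 + u' T = 0)
    (hM : IsGreatest ((fun t => |u t|) '' Set.Icc 0 T) M)
    (hne : ∃ t ∈ Set.Icc (0:ℝ) T, u t ≠ 0) :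
    (4 / T) * M ^ 2 < ∫ t in (0:ℝ)..T, (u' t) ^ 2 := by
  have hucont : ContinuousOn u (Icc 0 T) := fun t ht => (hderiv t ht).continuousWithinAt
  -- M > 0
  obtain ⟨t₂, ht₂, hut₂⟩ := hne
  have hMpos : 0 < M := lt_of_lt_of_le (abs_pos.mpr hut₂) (hM.2 ⟨t₂, ht₂, rfl⟩)
  obtain ⟨t₀, ht₀, hMt₀⟩ := hM.1
  have hInt : ∀ p ∈ Icc (0:ℝ) T, ∀ q ∈ Icc (0:ℝ) T, IntervalIntegrable u' volume p q := by
    intro p hp q hq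
    exact (hcont.mono (uIcc_subset_Icc hp hq)).intervalIntegrable
  have h0I : (0:ℝ) ∈ Icc (0:ℝ) T := ⟨le_rfl, hT.le⟩
  have hTI : T ∈ Icc (0:ℝ) T := ⟨hT.le, le_rfl⟩
  -- FTC on subintervals of [0,T]
  have FTC : ∀ a b : ℝ, 0 ≤ a → a ≤ b → b ≤ T → ∫ t in a..b, u' t = u b - u a := by
    intro a b ha hab hbT
    refine integral_eq_sub_of_hasDeriv_right_of_le hab
      (hucont.mono (Icc_subset_Icc ha hbT)) (fun x hx => ?_)
      (hInt a ⟨ha, hab.trans hbT⟩ b ⟨ha.trans hab, hbT⟩)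
    have hx0 : 0 < x := lt_of_le_of_lt ha hx.1
    have hxT : x < T := lt_of_lt_of_le hx.2 hbT
    exact ((hderiv x ⟨hx0.le, hxT.le⟩).hasDerivAt
      (Icc_mem_nhds hx0 hxT)).hasDerivWithinAt
  set A := ∫ t in (0:ℝ)..T, |u' t| with hA
  have habsInt : ∀ p ∈ Icc (0:ℝ) T, ∀ q ∈ Icc (0:ℝ) T,
      IntervalIntegrable (fun t => |u' t|) volume p q := by
    intro p hp q hq
    exact ((hcont.mono (uIcc_subset_Icc hp hq)).abs).intervalIntegrable
  have h2M : 2 * M ≤ A := by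
    have h1 : ∫ t in (0:ℝ)..t₀, u' t = u t₀ - u 0 := FTC 0 t₀ le_rfl ht₀.1 ht₀.2
    have h2 : ∫ t in t₀..T, u' t = u T - u t₀ := FTC t₀ T ht₀.1 ht₀.2 le_rfl
    have e1 : |∫ t in (0:ℝ)..t₀, u' t| ≤ ∫ t in (0:ℝ)..t₀, |u' t| :=
      abs_integral_le_integral_abs ht₀.1
    have e2 : |∫ t in t₀..T, u' t| ≤ ∫ t in t₀..T, |u' t| :=
      abs_integral_le_integral_abs ht₀.2
    have hadd : (∫ t in (0:ℝ)..t₀, |u' t|) + ∫ t in t₀..T, |u' t| = A :=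
      integral_add_adjacent_intervals (habsInt 0 h0I t₀ ht₀) (habsInt t₀ ht₀ T hTI)
    have hMt₀' : |u t₀| = M := hMt₀
    have key : 2 * M = |(u t₀ - u 0) - (u T - u t₀)| := by
      have : (u t₀ - u 0) - (u T - u t₀) = 2 * u t₀ - (u 0 + u T) := by ring
      rw [this, hant, sub_zero, abs_mul, abs_two, hMt₀']
    have := abs_sub (u t₀ - u 0) (u T - u t₀)
    rw [← h1, ← h2] at key
    calc 2 * M = |(∫ t in (0:ℝ)..t₀, u' t) - ∫ t in t₀..T, u' t| := key
      _ ≤ |∫ t in (0:ℝ)..t₀, u' t| + |∫ t in t₀..T, u' t| := abs_sub _ _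
      _ ≤ (∫ t in (0:ℝ)..t₀, |u' t|) + ∫ t in t₀..T, |u' t| := add_le_add e1 e2
      _ = A := hadd
  clear_value A
  by_contra hcon
  push_neg at hcon
  obtain ⟨c, hc⟩ : ∃ c : ℝ, c = 2 * M / T := ⟨_, rfl⟩
  have hcpos : 0 < c := by rw [hc]; exact div_pos (by linarith) hT
  -- expand ∫ (|u'| - c)^2
  have hsqInt : IntervalIntegrable (fun t => (u' t) ^ 2) volume 0 T := by
    refine ((hcont.pow 2).mono ?_).intervalIntegrable
    rw [uIcc_of_le hT.le]
  have hJ : ∫ t in (0:ℝ)..T, (|u' t| - c) ^ 2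
      = (∫ t in (0:ℝ)..T, (u' t) ^ 2) - 2 * c * A + c ^ 2 * T := by
    have expand : ∀ t : ℝ, (|u' t| - c) ^ 2 = (u' t) ^ 2 - (2 * c) * |u' t| + c ^ 2 := by
      intro t
      have : |u' t| ^ 2 = (u' t) ^ 2 := sq_abs _
      nlinarith [this]
    have hmulInt : IntervalIntegrable (fun t => (2 * c) * |u' t|) volume 0 T :=
      (habsInt 0 h0I T hTI).const_mul _
    calc ∫ t in (0:ℝ)..T, (|u' t| - c) ^ 2
        = ∫ t in (0:ℝ)..T, ((u' t) ^ 2 - (2 * c) * |u' t| + c ^ 2) :=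
          integral_congr (fun t _ => expand t)
      _ = (∫ t in (0:ℝ)..T, ((u' t) ^ 2 - (2 * c) * |u' t|)) + ∫ t in (0:ℝ)..T, (c:ℝ) ^ 2 :=
          integral_add (hsqInt.sub hmulInt) intervalIntegrable_const
      _ = (∫ t in (0:ℝ)..T, (u' t) ^ 2) - (∫ t in (0:ℝ)..T, (2 * c) * |u' t|)
            + ∫ t in (0:ℝ)..T, (c:ℝ) ^ 2 := by
          rw [integral_sub hsqInt hmulInt]
      _ = (∫ t in (0:ℝ)..T, (u' t) ^ 2) - 2 * c * A + c ^ 2 * T := by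
          rw [intervalIntegral.integral_const_mul, intervalIntegral.integral_const, ← hA]
          simp only [smul_eq_mul, sub_zero]
          ring
  have hJle : ∫ t in (0:ℝ)..T, (|u' t| - c) ^ 2 ≤ 0 := by
    rw [hJ]
    subst hc
    have e : (∫ t in (0:ℝ)..T, (u' t) ^ 2) - 2*(2*M/T)*A + (2*M/T)^2*T
        = (T*(∫ t in (0:ℝ)..T, (u' t) ^ 2) - 4*M*A + 4*M^2)/T := by
      field_simp; ring
    rw [e, div_le_iff₀ hT, zero_mul]
    have h3' : T * (∫ t in (0:ℝ)..T, (u' t) ^ 2) ≤ 4*M^2 := by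
      have := mul_le_mul_of_nonneg_left hcon hT.le
      have e2 : T * (4/T*M^2) = 4*M^2 := by field_simp
      linarith [e2 ▸ this]
    nlinarith [mul_le_mul_of_nonneg_left h2M (by linarith : (0:ℝ) ≤ 2*M)]
  have hzero : ∀ t ∈ Icc (0:ℝ) T, (|u' t| - c) ^ 2 = 0 := by
    refine aux_zero_of_nonneg_of_integral_nonpos hT ?_ (fun t _ => sq_nonneg _) hJle
    exact ((hcont.abs).sub continuousOn_const).pow 2
  have habs : ∀ t ∈ Icc (0:ℝ) T, |u' t| = c := by
    intro t ht
    have := hzero t ht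
    have := pow_eq_zero_iff (n := 2) (by norm_num) |>.mp this
    linarith [sub_eq_zero.mp this]
  -- u' 0 and u' T have opposite signs and magnitude c > 0, so u' vanishes somewhere
  have hu'0 : |u' 0| = c := habs 0 h0I
  have hu'0ne : u' 0 ≠ 0 := by
    intro h
    rw [h, abs_zero] at hu'0
    exact absurd hu'0.symm (ne_of_gt hcpos)
  have hmem : (0:ℝ) ∈ uIcc (u' 0) (u' T) := by
    have hTeq : u' T = -u' 0 := by linarith
    rcases lt_or_gt_of_ne hu'0ne with h | h
    · exact mem_uIcc.mpr (Or.inl ⟨h.le, by rw [hTeq]; linarith⟩)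
    · exact mem_uIcc.mpr (Or.inr ⟨by rw [hTeq]; linarith, h.le⟩)
  have hiv := intermediate_value_uIcc (f := u') (a := 0) (b := T)
    (by rw [uIcc_of_le hT.le]; exact hcont)
  obtain ⟨s, hs, hs0⟩ := hiv hmem
  rw [uIcc_of_le hT.le] at hs
  have := habs s hs
  rw [hs0, abs_zero] at this
  exact absurd this.symm (ne_of_gt hcpos)
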